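/- Let 0 < x < 1 and s ≤ 0 be real numbers. Then the cubic polynomial q(b) := (1−x)² + (1−x)(2+2x−sx)b − (1+x)(2(1−x)−sx)b² − (1+x)²b³ has exactly one root b in (0, ∞). -/

import Mathlib

/-- A cubic with sign pattern +,+,-,- has exactly one positive root. -/
lemma cubic_unique_pos_root (A B C D : ℝ) (hA : 0 < A) (hB : 0 < B)
    (hC : 0 ≤ C) (hD : 0 < D) :
    ∃! b : ℝ, 0 < b ∧ A + B*b - C*b^2 - D*b^3 = 0 := by
  set f : ℝ → ℝ := fun b => A + B*b - C*b^2 - D*b^3 with hf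
  have hcont : Continuous f := by fun_prop
  set M : ℝ := 1 + (A + B + 1)/D with hMdef
  have hM1 : 1 ≤ M := by
    have h : 0 < (A + B + 1)/D := by positivity
    simp only [hMdef]
    linarith
  have hDM : D * M = D + A + B + 1 := by
    field_simp [hMdef]
    rw [hMdef, mul_add, show D * ((A + B + 1) / D) = A + B + 1 by field_simp [hD.ne']]; ring
  have hfM : f M < 0 := by
    have hM0 : 0 < M := by linarith
    have h2 : M ≤ M^2 := by nlinarith
    have h3 : M^2 ≤ M^3 := by nlinarith
    have h4 : (A + B + 1) * M^2 ≤ D * M^3 := by nlinarith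
    have h5 : A + B*M + M ≤ (A + B + 1) * M := by nlinarith
    have h6 : (A + B + 1) * M ≤ (A + B + 1) * M^2 := by nlinarith
    have hCM : 0 ≤ C * M^2 := by positivity
    simp only [hf]
    nlinarith
  have hf0 : 0 < f 0 := by simp [hf]; nlinarith
  have hsub : Set.Ioo (f M) (f 0) ⊆ f '' Set.Ioo 0 M :=
    intermediate_value_Ioo' (by linarith) hcont.continuousOn
  obtain ⟨b, hbmem, hbeq⟩ := hsub ⟨hfM, hf0⟩
  have key : ∀ b1 b2 : ℝ, 0 < b1 → 0 < b2 →
      A + B*b1 - C*b1^2 - D*b1^3 = 0 → A + B*b2 - C*b2^2 - D*b2^3 = 0 → b1 = b2 := by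
    intro b1 b2 h1 h2 e1 e2
    rcases lt_trichotomy b1 b2 with h | h | h
    · exfalso
      have keyeq : A*(b2-b1) + C*b1*b2*(b2-b1) + D*b1*b2*(b2+b1)*(b2-b1) = 0 := by
        linear_combination b2*e1 - b1*e2
      nlinarith [mul_pos hA (sub_pos.2 h),
        mul_nonneg (mul_nonneg (mul_nonneg hC h1.le) h2.le) (sub_pos.2 h).le,
        mul_pos (mul_pos (mul_pos (mul_pos hD h1) h2) (by linarith : (0:ℝ) < b2+b1)) (sub_pos.2 h)]
    · exact h
    · exfalso
      have keyeq : A*(b1-b2) + C*b1*b2*(b1-b2) + D*b1*b2*(b1+b2)*(b1-b2) = 0 := by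
        linear_combination b1*e2 - b2*e1
      nlinarith [mul_pos hA (sub_pos.2 h),
        mul_nonneg (mul_nonneg (mul_nonneg hC h1.le) h2.le) (sub_pos.2 h).le,
        mul_pos (mul_pos (mul_pos (mul_pos hD h1) h2) (by linarith : (0:ℝ) < b1+b2)) (sub_pos.2 h)]
  refine ⟨b, ⟨hbmem.1, hbeq⟩, fun y hy => key y b hy.1 hbmem.1 hy.2 hbeq⟩

theorem stmt5 (s x : ℝ) (hx0 : 0 < x) (hx1 : x < 1) (hs : s ≤ 0) :
    ∃! b : ℝ, 0 < b ∧
      (1 - x)^2 + (1 - x)*(2 + 2*x - s*x)*b - (1 + x)*(2*(1 - x) - s*x)*b^2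
        - (1 + x)^2*b^3 = 0 := by
  have hA : 0 < (1 - x)^2 := pow_pos (by linarith) 2
  have hsx : 0 ≤ -(s*x) := by nlinarith [mul_nonneg (neg_nonneg.2 hs) hx0.le]
  have hB : 0 < (1 - x)*(2 + 2*x - s*x) := by nlinarith
  have hC : 0 ≤ (1 + x)*(2*(1 - x) - s*x) := by nlinarith
  have hD : 0 < (1 + x)^2 := by positivity
  obtain ⟨b, ⟨hbpos, hbeq⟩, huniq⟩ := cubic_unique_pos_root _ _ _ _ hA hB hC hD
  exact ⟨b, ⟨hbpos, by linear_combination hbeq⟩,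
    fun y hy => huniq y ⟨hy.1, by linear_combination hy.2⟩⟩
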